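/- arXiv:1307.2163 — 2 statements merged into one kernel-verified Lean document; each statement's English description precedes it below -/
import Mathlib

section
/- Let γ and γ' be geodesic rays from the origin in DL_2(q) that both bottom out at height −h in tree T_i. If there exists t with γ^(i)(t) ≠ γ'^(i)(t), then γ and γ' are not asymptotic. -/
/-- A vertex of the (q+1)-regular tree with a distinguished end, in the
horocyclic model: a height `k ∈ ℤ` together with a finitely supported
labelling of the levels strictly below `k`. -/
structure TreeVert (q : ℕ) where
  height : ℤ
  labels : ℤ → ℕ
  labels_lt : ∀ n, labels n = 0 ∨ labels n < q
  supp_below : ∀ n, height ≤ n → labels n = 0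
  fin_supp : (Function.support labels).Finite

namespace DL

variable {q d : ℕ}

/-- `v` is a child of `u` (one step further from the distinguished end). -/
abbrev treeAdjUp (u v : TreeVert q) : Prop :=
  v.height = u.height + 1 ∧ ∀ n, n ≠ u.height → v.labels n = u.labels n

/-- The (q+1)-regular tree. -/
def TreeGraph (q : ℕ) : SimpleGraph (TreeVert q) where
  Adj u v := treeAdjUp u v ∨ treeAdjUp v u
  symm := ⟨fun u v h => Or.symm h⟩
  loopless := by
    refine ⟨?_⟩
    intro u h
    rcases h with ⟨h1, _⟩ | ⟨h1, _⟩ <;> omega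

/-- The base vertex of the tree. -/
def treeOrigin (q : ℕ) : TreeVert q :=
  ⟨0, fun _ => 0, fun _ => Or.inl rfl, fun _ _ => rfl, by simp⟩

/-- Vertices of the Diestel–Leader graph `DL_d(q)`:
`d`-tuples of tree vertices whose heights sum to zero. -/
def DLVert (d q : ℕ) : Type :=
  {x : Fin d → TreeVert q // (∑ i, (x i).height) = 0}

/-- The Diestel–Leader graph `DL_d(q)`: an edge ascends in one tree and
descends in another, all other coordinates being fixed. -/
def DLGraph (d q : ℕ) : SimpleGraph (DLVert d q) where
  Adj v w := ∃ i j : Fin d, i ≠ j ∧ treeAdjUp (v.1 i) (w.1 i) ∧ treeAdjUp (w.1 j) (v.1 j) ∧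
      ∀ k : Fin d, k ≠ i → k ≠ j → v.1 k = w.1 k
  symm := by
    refine ⟨?_⟩
    rintro v w ⟨i, j, hij, h1, h2, h3⟩
    exact ⟨j, i, hij.symm, h2, h1, fun k hk1 hk2 => (h3 k hk2 hk1).symm⟩
  loopless := by
    refine ⟨?_⟩
    rintro v ⟨i, j, hij, ⟨h1, _⟩, _⟩
    omega

/-- The base point of `DL_d(q)`. -/
def origin (d q : ℕ) : DLVert d q :=
  ⟨fun _ => treeOrigin q, by simp [treeOrigin]⟩

/-- A geodesic ray in `DL_d(q)` : an isometric embedding of `ℕ`. -/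
def IsGeodesicRay (γ : ℕ → DLVert d q) : Prop :=
  ∀ m n : ℕ, m ≤ n → (DLGraph d q).dist (γ m) (γ n) = n - m

/-- Two rays are asymptotic when they stay at uniformly bounded distance. -/
def Asymptotic (γ γ' : ℕ → DLVert d q) : Prop :=
  ∃ C : ℕ, ∀ n : ℕ, (DLGraph d q).dist (γ n) (γ' n) ≤ C

instance : TopologicalSpace (DLVert d q) := ⊥

/-- Geodesic rays emanating from the origin, with the topology of uniform
convergence on compact sets (= pointwise convergence, the vertex set being
discrete). -/
def RaySpace (d q : ℕ) : Type :=
  {γ : ℕ → DLVert d q // IsGeodesicRay γ ∧ γ 0 = origin d q}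

instance : TopologicalSpace (RaySpace d q) := by
  unfold RaySpace; infer_instance

lemma reachable_origin (γ : RaySpace d q) (n : ℕ) :
    (DLGraph d q).Reachable (origin d q) (γ.1 n) := by
  cases n with
  | zero => rw [γ.2.2]
  | succ n =>
    have h := γ.2.1 0 (n + 1) (Nat.zero_le _)
    have hne : (DLGraph d q).dist (γ.1 0) (γ.1 (n + 1)) ≠ 0 := by
      rw [h]; omega
    have := SimpleGraph.Reachable.of_dist_ne_zero hne
    rwa [γ.2.2] at this

/-- Asymptoticity as an equivalence relation on geodesic rays from the origin. -/
def asympSetoid (d q : ℕ) : Setoid (RaySpace d q) where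
  r γ γ' := Asymptotic γ.1 γ'.1
  iseqv := by
    constructor
    · intro γ
      exact ⟨0, fun n => by simp [SimpleGraph.dist_self]⟩
    · rintro γ γ' ⟨C, hC⟩
      exact ⟨C, fun n => by rw [SimpleGraph.dist_comm]; exact hC n⟩
    · rintro a b c ⟨C1, h1⟩ ⟨C2, h2⟩
      refine ⟨C1 + C2, fun n => ?_⟩
      have hab : (DLGraph d q).Reachable (a.1 n) (b.1 n) :=
        (reachable_origin a n).symm.trans (reachable_origin b n)
      have hbc : (DLGraph d q).Reachable (b.1 n) (c.1 n) :=
        (reachable_origin b n).symm.trans (reachable_origin c n)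
      obtain ⟨p, hp⟩ := hab.exists_walk_length_eq_dist
      obtain ⟨p', hp'⟩ := hbc.exists_walk_length_eq_dist
      calc (DLGraph d q).dist (a.1 n) (c.1 n) ≤ (p.append p').length :=
            SimpleGraph.dist_le _
        _ = (DLGraph d q).dist (a.1 n) (b.1 n) + (DLGraph d q).dist (b.1 n) (c.1 n) := by
            rw [SimpleGraph.Walk.length_append, hp, hp']
        _ ≤ C1 + C2 := Nat.add_le_add (h1 n) (h2 n)

/-- The visual boundary of `DL_d(q)`: asymptotic classes of geodesic rays
from the origin, with the quotient topology. -/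
def Boundary (d q : ℕ) : Type := Quotient (asympSetoid d q)

instance : TopologicalSpace (Boundary d q) := by
  unfold Boundary; infer_instance

/-- A ray in `DL_2(q)` descends for exactly `n` steps in tree `i`
(bottoming out at height `-n`), then ascends forever in tree `i`.
For `n = 0` this says the ray ascends forever in tree `i` with no turn. -/
def DescendsExactly (i : Fin 2) (n : ℕ) (γ : ℕ → DLVert 2 q) : Prop :=
  (∀ t : ℕ, t ≤ n → ((γ t).1 i).height = -(t : ℤ)) ∧
  (∀ t : ℕ, n ≤ t → ((γ t).1 i).height = (t : ℤ) - 2 * n)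

/-- The subset `C_n^i` of the boundary: classes of rays bottoming out in
tree `i` after descending exactly `n` edges. -/
def Cset (q : ℕ) (i : Fin 2) (n : ℕ) : Set (Boundary 2 q) :=
  {x | ∃ γ : RaySpace 2 q, Quotient.mk (asympSetoid 2 q) γ = x ∧ DescendsExactly i n γ.1}

/-- Projection of a path in `DL_d(q)` to the `i`-th tree. -/
def proj (i : Fin d) (γ : ℕ → DLVert d q) : ℕ → TreeVert q := fun n => (γ n).1 i

/-- Two (lazy) paths in the tree converge to the same end: both eventually
leave every ball, and they come within a uniformly bounded distance of each
other at arbitrarily late times. -/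
def SameEnd (a b : ℕ → TreeVert q) : Prop :=
  (∀ R : ℕ, ∃ N : ℕ, ∀ n, N ≤ n → R ≤ (TreeGraph q).dist (a 0) (a n)) ∧
  (∀ R : ℕ, ∃ N : ℕ, ∀ n, N ≤ n → R ≤ (TreeGraph q).dist (b 0) (b n)) ∧
  (∃ C : ℕ, ∀ N : ℕ, ∃ m n, N ≤ m ∧ N ≤ n ∧ (TreeGraph q).dist (a m) (b n) ≤ C)

/-- The step from `p m` to `p (m+1)` descends in tree `i`. -/
def StepDown (i : Fin d) (p : ℕ → DLVert d q) (m : ℕ) : Prop :=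
  treeAdjUp ((p (m + 1)).1 i) ((p m).1 i)

/-- The step from `p m` to `p (m+1)` ascends in tree `i`. -/
def StepUp (i : Fin d) (p : ℕ → DLVert d q) (m : ℕ) : Prop :=
  treeAdjUp ((p m).1 i) ((p (m + 1)).1 i)

/-- A turn in tree `i`: a subpath beginning with a descent in `T_i` at step `t`,
ending with an ascent in `T_i` at step `s`, with no intervening step
involving `T_i`. -/
def IsTurn (i : Fin d) (p : ℕ → DLVert d q) (t s : ℕ) : Prop :=
  t < s ∧ StepDown i p t ∧ StepUp i p s ∧
    ∀ m, t < m → m < s → (p (m + 1)).1 i = (p m).1 i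


/-! ### Auxiliary lemmas for Statement 4 -/

lemma TreeVert.ext' {u v : TreeVert q} (h1 : u.height = v.height)
    (h2 : u.labels = v.labels) : u = v := by
  cases u; cases v; simp_all

/-- The vertex at height `k` with all labels zero. -/
def zeroVert (q : ℕ) (k : ℤ) : TreeVert q :=
  ⟨k, fun _ => 0, fun _ => Or.inl rfl, fun _ _ => rfl, by simp⟩

lemma tree_adj_iff {u v : TreeVert q} :
    (TreeGraph q).Adj u v ↔ treeAdjUp u v ∨ treeAdjUp v u := Iff.rfl

/-- Any walk in the tree has length at least the height difference. -/
lemma tree_height_bound {u v : TreeVert q} (p : (TreeGraph q).Walk u v) :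
    u.height - v.height ≤ (p.length : ℤ) ∧ v.height - u.height ≤ (p.length : ℤ) := by
  induction p with
  | nil => simp
  | cons h p ih =>
    rcases tree_adj_iff.mp h with ⟨h1, -⟩ | ⟨h1, -⟩ <;>
    · simp only [SimpleGraph.Walk.length_cons]
      push_cast
      omega

/-- If the labels of `u` and `v` differ at level `n₀`, any walk from `u` to `v`
must descend to height `n₀` and come back, giving a length lower bound. -/
lemma tree_label_bound (n₀ : ℤ) :
    ∀ {u v : TreeVert q} (p : (TreeGraph q).Walk u v),
      u.labels n₀ ≠ v.labels n₀ →
      u.height + v.height - 2 * n₀ ≤ (p.length : ℤ) := by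
  intro u v p
  induction p with
  | nil => intro hd; exact absurd rfl hd
  | @cons u b v h p ih =>
    intro hd
    simp only [SimpleGraph.Walk.length_cons]
    push_cast
    by_cases hb : b.labels n₀ = v.labels n₀
    · -- the first step changed the label at level `n₀`, so `n₀` is the lower height
      have hub : u.labels n₀ ≠ b.labels n₀ := fun h' => hd (h'.trans hb)
      have hhb := tree_height_bound p
      rcases tree_adj_iff.mp h with ⟨h1, h2⟩ | ⟨h1, h2⟩
      · have hn : n₀ = u.height := by
          by_contra hne
          exact hub (h2 n₀ hne).symm
        omega
      · have hn : n₀ = b.height := by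
          by_contra hne
          exact hub (h2 n₀ hne)
        omega
    · have := ih hb
      rcases tree_adj_iff.mp h with ⟨h1, -⟩ | ⟨h1, -⟩ <;> omega

/-- Projection to the `i`-th tree is a graph homomorphism (for `d = 2`). -/
def projHom (q : ℕ) (i : Fin 2) : DLGraph 2 q →g TreeGraph q where
  toFun := fun x => x.1 i
  map_rel' := by
    rintro x y ⟨a, b, hab, h1, h2, h3⟩
    have hiab : i = a ∨ i = b := by
      have hv : a.val ≠ b.val := fun h => hab (Fin.ext h)
      have ha := a.isLt; have hb := b.isLt; have hi := i.isLt
      have : i.val = a.val ∨ i.val = b.val := by omega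
      rcases this with h | h
      exacts [Or.inl (Fin.ext h), Or.inr (Fin.ext h)]
    rcases hiab with rfl | rfl
    · exact Or.inl h1
    · exact Or.inr h2

lemma ray_reachable_origin {γ : ℕ → DLVert 2 q} (hγ : IsGeodesicRay γ)
    (hγ0 : γ 0 = origin 2 q) (n : ℕ) :
    (DLGraph 2 q).Reachable (origin 2 q) (γ n) := by
  cases n with
  | zero => rw [hγ0]
  | succ n =>
    have h := hγ 0 (n + 1) (Nat.zero_le _)
    have hne : (DLGraph 2 q).dist (γ 0) (γ (n + 1)) ≠ 0 := by rw [h]; omega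
    have := SimpleGraph.Reachable.of_dist_ne_zero hne
    rwa [hγ0] at this

lemma ray_step_adj {γ : ℕ → DLVert 2 q} (hγ : IsGeodesicRay γ) (t : ℕ) :
    (DLGraph 2 q).Adj (γ t) (γ (t + 1)) := by
  have h := hγ t (t + 1) (Nat.le_succ t)
  have : (DLGraph 2 q).dist (γ t) (γ (t + 1)) = 1 := by omega
  exact (SimpleGraph.dist_eq_one_iff_adj).mp this

lemma ray_step_tree_adj {γ : ℕ → DLVert 2 q} (hγ : IsGeodesicRay γ) (i : Fin 2) (t : ℕ) :
    (TreeGraph q).Adj ((γ t).1 i) ((γ (t + 1)).1 i) :=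
  (projHom q i).map_rel (ray_step_adj hγ t)

/-- During the forced descent, the projection to tree `i` is the all-zero vertex. -/
lemma descend_eq_zeroVert {γ : ℕ → DLVert 2 q} {i : Fin 2} {h : ℕ}
    (hγ : IsGeodesicRay γ) (hγ0 : γ 0 = origin 2 q) (hdesc : DescendsExactly i h γ) :
    ∀ t : ℕ, t ≤ h → (γ t).1 i = zeroVert q (-(t : ℤ)) := by
  intro t
  induction t with
  | zero =>
    intro _
    rw [hγ0]
    apply TreeVert.ext' <;> simp [origin, treeOrigin, zeroVert]
  | succ t ih =>
    intro ht
    have ht' : t ≤ h := by omega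
    have ha := ih ht'
    have hha : ((γ t).1 i).height = -(t : ℤ) := hdesc.1 t ht'
    have hhb : ((γ (t + 1)).1 i).height = -((t : ℤ) + 1) := by
      have := hdesc.1 (t + 1) ht
      push_cast at this ⊢
      omega
    have hadj := ray_step_tree_adj hγ i t
    rcases tree_adj_iff.mp hadj with ⟨h1, -⟩ | ⟨h1, h2⟩
    · omega
    · apply TreeVert.ext'
      · simp only [zeroVert]
        rw [hhb]; push_cast; ring
      · funext m
        by_cases hm : m = ((γ (t + 1)).1 i).height
        · rw [((γ (t + 1)).1 i).supp_below m (le_of_eq hm.symm)]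
          simp [zeroVert]
        · have := h2 m hm
          rw [ha] at this
          simp only [zeroVert] at this ⊢
          omega

/-- After the turn, labels at levels strictly below the current height never change. -/
lemma label_stable {γ : ℕ → DLVert 2 q} {i : Fin 2} {h : ℕ}
    (hγ : IsGeodesicRay γ) (hdesc : DescendsExactly i h γ)
    (T : ℕ) (hT : h ≤ T) (n₀ : ℤ) (hn₀ : n₀ < (T : ℤ) - 2 * h) :
    ∀ t : ℕ, T ≤ t → ((γ t).1 i).labels n₀ = ((γ T).1 i).labels n₀ := by
  intro t hTt
  induction t, hTt using Nat.le_induction with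
  | base => rfl
  | succ t hTt ih =>
    have hth : h ≤ t := le_trans hT hTt
    have hha : ((γ t).1 i).height = (t : ℤ) - 2 * h := hdesc.2 t hth
    have hhb : ((γ (t + 1)).1 i).height = ((t : ℤ) + 1) - 2 * h := by
      have := hdesc.2 (t + 1) (by omega)
      push_cast at this ⊢
      omega
    have hadj := ray_step_tree_adj hγ i t
    rcases tree_adj_iff.mp hadj with ⟨h1, h2⟩ | ⟨h1, -⟩
    · have hm : n₀ ≠ ((γ t).1 i).height := by
        rw [hha]
        have : (T : ℤ) ≤ t := by exact_mod_cast hTt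
        omega
      rw [h2 n₀ hm, ih]
    · omega

/-- two geodesic rays from the origin of `DL_2(q)` bottoming out
at height `-h` in tree `i` whose projections to tree `i` differ somewhere are
not asymptotic. -/
theorem not_asymptotic_of_different_projection {q : ℕ} (hq : 2 ≤ q) (i : Fin 2)
    (h : ℕ) (γ γ' : ℕ → DLVert 2 q)
    (hγ : IsGeodesicRay γ) (hγ' : IsGeodesicRay γ')
    (hγ0 : γ 0 = origin 2 q) (hγ'0 : γ' 0 = origin 2 q)
    (hdesc : DescendsExactly i h γ) (hdesc' : DescendsExactly i h γ')
    (hne : ∃ t : ℕ, (γ t).1 i ≠ (γ' t).1 i) :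
    ¬ Asymptotic γ γ' := by
  obtain ⟨T, hT⟩ := hne
  -- during the descent the two projections agree, so the difference occurs after the turn
  have hTh : h < T := by
    by_contra hle
    push_neg at hle
    rw [descend_eq_zeroVert hγ hγ0 hdesc T hle,
      descend_eq_zeroVert hγ' hγ'0 hdesc' T hle] at hT
    exact hT rfl
  have hhT : ((γ T).1 i).height = (T : ℤ) - 2 * h := hdesc.2 T (le_of_lt hTh)
  have hhT' : ((γ' T).1 i).height = (T : ℤ) - 2 * h := hdesc'.2 T (le_of_lt hTh)
  -- the projections have equal heights, so their labels differ at some level n₀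
  have hlab : ((γ T).1 i).labels ≠ ((γ' T).1 i).labels := by
    intro heq
    exact hT (TreeVert.ext' (hhT.trans hhT'.symm) heq)
  obtain ⟨n₀, hn₀⟩ := Function.ne_iff.mp hlab
  have hn₀lt : n₀ < (T : ℤ) - 2 * h := by
    by_contra hge
    push_neg at hge
    rw [((γ T).1 i).supp_below n₀ (by omega), ((γ' T).1 i).supp_below n₀ (by omega)] at hn₀
    exact hn₀ rfl
  rintro ⟨C, hC⟩
  -- evaluate at a late enough time
  set n : ℕ := T + C + 1 with hn
  have hTn : T ≤ n := by omega
  have hhn : ((γ n).1 i).height = (n : ℤ) - 2 * h := hdesc.2 n (by omega)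
  have hhn' : ((γ' n).1 i).height = (n : ℤ) - 2 * h := hdesc'.2 n (by omega)
  have hlabn : ((γ n).1 i).labels n₀ ≠ ((γ' n).1 i).labels n₀ := by
    rw [label_stable hγ hdesc T (le_of_lt hTh) n₀ hn₀lt n hTn,
      label_stable hγ' hdesc' T (le_of_lt hTh) n₀ hn₀lt n hTn]
    exact hn₀
  -- project a geodesic between γ n and γ' n to the tree
  have hr : (DLGraph 2 q).Reachable (γ n) (γ' n) :=
    (ray_reachable_origin hγ hγ0 n).symm.trans (ray_reachable_origin hγ' hγ'0 n)
  obtain ⟨p, hp⟩ := hr.exists_walk_length_eq_dist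
  have hbound := tree_label_bound n₀ (p.map (projHom q i)) hlabn
  rw [SimpleGraph.Walk.length_map, hp] at hbound
  have hCle : (DLGraph 2 q).dist (γ n) (γ' n) ≤ C := hC n
  have hbound2 : ((γ n).1 i).height + ((γ' n).1 i).height - 2 * n₀ ≤
      ((DLGraph 2 q).dist (γ n) (γ' n) : ℤ) := hbound
  rw [hhn, hhn'] at hbound2
  have hnval : (n : ℤ) = (T : ℤ) + C + 1 := by push_cast [hn]; ring
  have : ((DLGraph 2 q).dist (γ n) (γ' n) : ℤ) ≤ (C : ℤ) := by exact_mod_cast hCle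
  omega

end DL
end

section
/- The set C_n^i (for n > 0) of asymptotic classes of geodesic rays from the origin in DL_2(q) that bottom out in T_i after descending exactly n edges is open in the visual boundary ∂DL_2(q), where the topology is the quotient of the compact-open topology on geodesic rays from the origin. -/
namespace DL

variable {q d : ℕ}

section Aux

variable {q : ℕ}

lemma TreeVert.ext'_s7 {a b : TreeVert q} (h1 : a.height = b.height)
    (h2 : a.labels = b.labels) : a = b := by
  cases a; cases b; simp_all

/-- the parent of a tree vertex -/
def tparent (v : TreeVert q) : TreeVert q where
  height := v.height - 1
  labels := fun ℓ => if v.height - 1 ≤ ℓ then 0 else v.labels ℓ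
  labels_lt := fun ℓ => by
    split
    · exact Or.inl rfl
    · exact v.labels_lt ℓ
  supp_below := fun ℓ h => by rw [if_pos h]
  fin_supp := by
    refine v.fin_supp.subset fun ℓ hl => ?_
    simp only [Function.mem_support] at hl ⊢
    intro h0; apply hl; split
    · rfl
    · exact h0

/-- a child of a tree vertex, with chosen label -/
def tchild (v : TreeVert q) (c : ℕ) (hc : c = 0 ∨ c < q) : TreeVert q where
  height := v.height + 1
  labels := fun ℓ => if ℓ = v.height then c else v.labels ℓ
  labels_lt := fun ℓ => by
    split
    · exact hc
    · exact v.labels_lt ℓ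
  supp_below := fun ℓ h => by
    rw [if_neg (by omega)]
    exact v.supp_below ℓ (by omega)
  fin_supp := by
    refine (v.fin_supp.union (Set.finite_singleton v.height)).subset fun ℓ hl => ?_
    simp only [Function.mem_support] at hl
    by_cases h : ℓ = v.height
    · exact Or.inr h
    · left; rw [if_neg h] at hl; exact hl

lemma tparent_adj (v : TreeVert q) : treeAdjUp (tparent v) v := by
  constructor
  · show v.height = v.height - 1 + 1; omega
  · intro ℓ hl
    show v.labels ℓ = if v.height - 1 ≤ ℓ then 0 else v.labels ℓ
    by_cases h : v.height - 1 ≤ ℓ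
    · rw [if_pos h]
      exact v.supp_below ℓ (by
        have : ℓ ≠ v.height - 1 := hl
        omega)
    · rw [if_neg h]

lemma tchild_adj (v : TreeVert q) (c : ℕ) (hc : c = 0 ∨ c < q) :
    treeAdjUp v (tchild v c hc) := by
  refine ⟨rfl, fun ℓ hl => ?_⟩
  show (if ℓ = v.height then c else v.labels ℓ) = v.labels ℓ
  rw [if_neg hl]

/-- the other coordinate in `Fin 2` -/
def oth (i : Fin 2) : Fin 2 := if i = 0 then 1 else 0

lemma oth_ne (i : Fin 2) : oth i ≠ i := by fin_cases i <;> decide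

lemma oth_oth (i : Fin 2) : oth (oth i) = i := by fin_cases i <;> rfl

lemma eq_or_eq_oth (i k : Fin 2) : k = i ∨ k = oth i := by
  fin_cases i <;> fin_cases k <;> simp [oth]

lemma fin2_cover {a b i : Fin 2} (hab : a ≠ b) :
    (i = a ∧ oth i = b) ∨ (i = b ∧ oth i = a) := by
  fin_cases a <;> fin_cases b <;> fin_cases i <;> simp_all [oth]

/-- height of the `i` component -/
def hgt (i : Fin 2) (v : DLVert 2 q) : ℤ := (v.1 i).height

lemma hgt_def (i : Fin 2) (v : DLVert 2 q) : hgt i v = (v.1 i).height := rfl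

lemma hgt_oth (i : Fin 2) (v : DLVert 2 q) : hgt (oth i) v = - hgt i v := by
  have h2 := v.2
  rw [Fin.sum_univ_two] at h2
  fin_cases i <;> simp only [hgt, oth] <;> simp <;> omega

lemma hgt_origin (i : Fin 2) : hgt i (origin 2 q) = 0 := rfl

lemma adj_cases {v w : DLVert 2 q} (h : (DLGraph 2 q).Adj v w) (i : Fin 2) :
    (treeAdjUp (v.1 i) (w.1 i) ∧ treeAdjUp (w.1 (oth i)) (v.1 (oth i))) ∨
    (treeAdjUp (w.1 i) (v.1 i) ∧ treeAdjUp (v.1 (oth i)) (w.1 (oth i))) := by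
  obtain ⟨a, b, hab, h1, h2, _⟩ := h
  rcases fin2_cover (i := i) hab with ⟨ha, hb⟩ | ⟨ha, hb⟩
  · subst ha; rw [hb]; left; exact ⟨h1, h2⟩
  · subst ha; rw [hb]; right; exact ⟨h2, h1⟩

lemma adj_hgt {v w : DLVert 2 q} (h : (DLGraph 2 q).Adj v w) (i : Fin 2) :
    hgt i w = hgt i v + 1 ∨ hgt i w = hgt i v - 1 := by
  rcases adj_cases h i with ⟨⟨h1, _⟩, _⟩ | ⟨⟨h1, _⟩, _⟩
  · left; rw [hgt_def, hgt_def, h1]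
  · right; rw [hgt_def, hgt_def] ; omega

lemma adj_labels_eq {v w : DLVert 2 q} (h : (DLGraph 2 q).Adj v w) (i : Fin 2)
    (ℓ : ℤ) (h1 : ℓ < hgt i v) (h2 : ℓ < hgt i w) :
    ((w.1 i)).labels ℓ = ((v.1 i)).labels ℓ := by
  rcases adj_cases h i with ⟨⟨_, hlab⟩, _⟩ | ⟨⟨_, hlab⟩, _⟩
  · exact hlab ℓ (by rw [hgt_def] at h1; omega)
  · exact (hlab ℓ (by rw [hgt_def] at h2; omega)).symm

lemma ray_adj (γ : RaySpace 2 q) (t : ℕ) :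
    (DLGraph 2 q).Adj (γ.1 t) (γ.1 (t + 1)) := by
  have h := γ.2.1 t (t + 1) (Nat.le_succ t)
  rw [SimpleGraph.dist_eq_one_iff_adj.symm]
  omega

lemma ray_dist (γ : RaySpace 2 q) (t : ℕ) :
    (DLGraph 2 q).dist (origin 2 q) (γ.1 t) = t := by
  have h := γ.2.1 0 t (Nat.zero_le t)
  rw [γ.2.2] at h
  simpa using h

lemma ray_vanish (γ : RaySpace 2 q) (i : Fin 2) (t : ℕ) (ℓ : ℤ)
    (hl : ∀ u, u ≤ t → ℓ < hgt i (γ.1 u)) :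
    ((γ.1 t).1 i).labels ℓ = 0 := by
  induction t with
  | zero =>
    rw [γ.2.2]
    rfl
  | succ t ih =>
    rw [adj_labels_eq (ray_adj γ t) i ℓ (hl t (Nat.le_succ t)) (hl (t + 1) le_rfl)]
    exact ih fun u hu => hl u (hu.trans (Nat.le_succ t))

end Aux
section Walks

variable {q : ℕ}

/-- one step in `DL_2(q)`: descend in tree `i`, ascend in the other tree
with chosen label `c`. -/
def mv (v : DLVert 2 q) (i : Fin 2) (c : ℕ) (hc : c = 0 ∨ c < q) : DLVert 2 q :=
  ⟨fun k => if k = i then tparent (v.1 i) else tchild (v.1 k) c hc, by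
    have hv := v.2
    rw [Fin.sum_univ_two] at hv ⊢
    fin_cases i <;> simp [tparent, tchild, Fin.ext_iff] <;> omega⟩

lemma mv_fst (v : DLVert 2 q) (i : Fin 2) (c : ℕ) (hc : c = 0 ∨ c < q) :
    (mv v i c hc).1 i = tparent (v.1 i) := by
  show (if i = i then tparent (v.1 i) else tchild (v.1 i) c hc) = tparent (v.1 i)
  rw [if_pos rfl]

lemma mv_snd (v : DLVert 2 q) (i : Fin 2) (c : ℕ) (hc : c = 0 ∨ c < q) :
    (mv v i c hc).1 (oth i) = tchild (v.1 (oth i)) c hc := by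
  show (if oth i = i then tparent (v.1 i) else tchild (v.1 (oth i)) c hc)
      = tchild (v.1 (oth i)) c hc
  rw [if_neg (oth_ne i)]

lemma mv_adj (v : DLVert 2 q) (i : Fin 2) (c : ℕ) (hc : c = 0 ∨ c < q) :
    (DLGraph 2 q).Adj v (mv v i c hc) := by
  refine ⟨oth i, i, oth_ne i, ?_, ?_, ?_⟩
  · rw [mv_snd]; exact tchild_adj _ _ _
  · rw [mv_fst]; exact tparent_adj _
  · intro k hk1 hk2
    rcases eq_or_eq_oth i k with h | h
    · exact absurd h hk2
    · exact absurd h hk1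

lemma mv_hgt_i (v : DLVert 2 q) (i : Fin 2) (c : ℕ) (hc : c = 0 ∨ c < q) :
    hgt i (mv v i c hc) = hgt i v - 1 := by
  rw [hgt_def, mv_fst]; rfl

lemma mv_hgt_oth (v : DLVert 2 q) (i : Fin 2) (c : ℕ) (hc : c = 0 ∨ c < q) :
    hgt (oth i) (mv v i c hc) = hgt (oth i) v + 1 := by
  rw [hgt_def, mv_snd]; rfl

/-- iterated moves: descend `k` steps in tree `i`, ascending in the other
tree choosing labels according to `φ` (by level). -/
def run (i : Fin 2) (φ : ℤ → ℕ) (hφ : ∀ m, φ m = 0 ∨ φ m < q) (v : DLVert 2 q) :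
    ℕ → DLVert 2 q
  | 0 => v
  | k + 1 =>
      mv (run i φ hφ v k) i (φ (hgt (oth i) (run i φ hφ v k))) (hφ _)

lemma run_hgt_i (i : Fin 2) (φ : ℤ → ℕ) (hφ : ∀ m, φ m = 0 ∨ φ m < q)
    (v : DLVert 2 q) (k : ℕ) : hgt i (run i φ hφ v k) = hgt i v - k := by
  induction k with
  | zero => simp [run]
  | succ k ih =>
    show hgt i (mv _ i _ _) = _
    rw [mv_hgt_i, ih]
    push_cast
    ring

lemma run_hgt_oth (i : Fin 2) (φ : ℤ → ℕ) (hφ : ∀ m, φ m = 0 ∨ φ m < q)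
    (v : DLVert 2 q) (k : ℕ) :
    hgt (oth i) (run i φ hφ v k) = hgt (oth i) v + k := by
  induction k with
  | zero => simp [run]
  | succ k ih =>
    show hgt (oth i) (mv _ i _ _) = _
    rw [mv_hgt_oth, ih]
    push_cast
    ring

lemma run_labels_i (i : Fin 2) (φ : ℤ → ℕ) (hφ : ∀ m, φ m = 0 ∨ φ m < q)
    (v : DLVert 2 q) (k : ℕ) (ℓ : ℤ) (hℓ : ℓ < hgt i v - k) :
    ((run i φ hφ v k).1 i).labels ℓ = ((v.1 i)).labels ℓ := by
  induction k with
  | zero => rfl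
  | succ k ih =>
    show ((mv (run i φ hφ v k) i _ _).1 i).labels ℓ = _
    rw [mv_fst]
    show (if hgt i (run i φ hφ v k) - 1 ≤ ℓ then 0 else _) = _
    rw [run_hgt_i, if_neg (by push_cast at hℓ ⊢; omega)]
    exact ih (by push_cast at hℓ ⊢; omega)

lemma run_labels_oth_lo (i : Fin 2) (φ : ℤ → ℕ) (hφ : ∀ m, φ m = 0 ∨ φ m < q)
    (v : DLVert 2 q) (k : ℕ) (ℓ : ℤ) (hℓ : ℓ < hgt (oth i) v) :
    ((run i φ hφ v k).1 (oth i)).labels ℓ = ((v.1 (oth i))).labels ℓ := by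
  induction k with
  | zero => rfl
  | succ k ih =>
    show ((mv (run i φ hφ v k) i _ _).1 (oth i)).labels ℓ = _
    rw [mv_snd]
    show (if ℓ = hgt (oth i) (run i φ hφ v k) then _ else _) = _
    rw [run_hgt_oth, if_neg (by omega)]
    exact ih

lemma run_labels_oth_mid (i : Fin 2) (φ : ℤ → ℕ) (hφ : ∀ m, φ m = 0 ∨ φ m < q)
    (v : DLVert 2 q) (k : ℕ) (ℓ : ℤ) (h1 : hgt (oth i) v ≤ ℓ)
    (h2 : ℓ < hgt (oth i) v + k) :
    ((run i φ hφ v k).1 (oth i)).labels ℓ = φ ℓ := by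
  induction k with
  | zero => omega
  | succ k ih =>
    show ((mv (run i φ hφ v k) i _ _).1 (oth i)).labels ℓ = _
    rw [mv_snd]
    show (if ℓ = hgt (oth i) (run i φ hφ v k) then φ (hgt (oth i) (run i φ hφ v k)) else _) = _
    rw [run_hgt_oth]
    by_cases h : ℓ = hgt (oth i) v + k
    · rw [if_pos h, ← h]
    · rw [if_neg h]
      exact ih (by push_cast at h2 ⊢; omega)

lemma run_walk (i : Fin 2) (φ : ℤ → ℕ) (hφ : ∀ m, φ m = 0 ∨ φ m < q)
    (v : DLVert 2 q) (k : ℕ) :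
    ∃ w : (DLGraph 2 q).Walk v (run i φ hφ v k), w.length = k := by
  induction k with
  | zero => exact ⟨SimpleGraph.Walk.nil, rfl⟩
  | succ k ih =>
    obtain ⟨w, hw⟩ := ih
    exact ⟨w.concat (mv_adj _ i _ _), (SimpleGraph.Walk.length_concat _ _).trans (congrArg (· + 1) hw)⟩

end Walks
section WBound

variable {q : ℕ}

lemma run_hgt_oth' (i j : Fin 2) (hij : i = oth j) (φ : ℤ → ℕ)
    (hφ : ∀ m, φ m = 0 ∨ φ m < q) (v : DLVert 2 q) (k : ℕ) :
    hgt i (run j φ hφ v k) = hgt i v + k := by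
  subst hij; exact run_hgt_oth j φ hφ v k

lemma run_labels_oth_lo' (i j : Fin 2) (hij : i = oth j) (φ : ℤ → ℕ)
    (hφ : ∀ m, φ m = 0 ∨ φ m < q) (v : DLVert 2 q) (k : ℕ) (ℓ : ℤ)
    (hℓ : ℓ < hgt i v) :
    ((run j φ hφ v k).1 i).labels ℓ = ((v.1 i)).labels ℓ := by
  subst hij; exact run_labels_oth_lo j φ hφ v k ℓ hℓ

lemma run_labels_oth_mid' (i j : Fin 2) (hij : i = oth j) (φ : ℤ → ℕ)
    (hφ : ∀ m, φ m = 0 ∨ φ m < q) (v : DLVert 2 q) (k : ℕ) (ℓ : ℤ)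
    (h1 : hgt i v ≤ ℓ) (h2 : ℓ < hgt i v + k) :
    ((run j φ hφ v k).1 i).labels ℓ = φ ℓ := by
  subst hij; exact run_labels_oth_mid j φ hφ v k ℓ h1 h2

lemma dist_origin_le_aux (z : DLVert 2 q) (i : Fin 2) (p r : ℤ)
    (hp : p ≤ 0) (hr : hgt i z ≤ r) (hh : 0 ≤ hgt i z)
    (hvi : ∀ ℓ, ℓ < p → ((z.1 i)).labels ℓ = 0)
    (hvj : ∀ ℓ, ℓ < -r → ((z.1 (oth i))).labels ℓ = 0) :
    ((DLGraph 2 q).dist (origin 2 q) z : ℤ) ≤ 2 * (r - p) - hgt i z := by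
  have hio : i = oth (oth i) := (oth_oth i).symm
  set h : ℤ := hgt i z with hdef
  set k1 : ℕ := (-p).toNat with hk1
  set k2 : ℕ := (r - p).toNat with hk2
  set k3 : ℕ := (r - h).toNat with hk3
  have ck1 : (k1 : ℤ) = -p := Int.toNat_of_nonneg (by omega)
  have ck2 : (k2 : ℤ) = r - p := Int.toNat_of_nonneg (by omega)
  have ck3 : (k3 : ℤ) = r - h := Int.toNat_of_nonneg (by omega)
  have hφ1 : ∀ m : ℤ, (fun _ : ℤ => (0:ℕ)) m = 0 ∨ (fun _ : ℤ => (0:ℕ)) m < q :=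
    fun _ => Or.inl rfl
  set w1 : DLVert 2 q := run i (fun _ => 0) hφ1 (origin 2 q) k1 with hw1
  set w2 : DLVert 2 q := run (oth i) ((z.1 i)).labels ((z.1 i)).labels_lt w1 k2 with hw2
  set w3 : DLVert 2 q := run i ((z.1 (oth i))).labels ((z.1 (oth i))).labels_lt w2 k3 with hw3
  have h1i : hgt i w1 = p := by rw [hw1, run_hgt_i, hgt_origin]; omega
  have h1o : hgt (oth i) w1 = -p := by rw [hw1, run_hgt_oth, hgt_origin]; omega
  have h2o : hgt (oth i) w2 = -r := by rw [hw2, run_hgt_i, h1o]; omega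
  have h2i : hgt i w2 = r := by rw [hw2, run_hgt_oth' i (oth i) hio, h1i]; omega
  have h3i : hgt i w3 = h := by rw [hw3, run_hgt_i, h2i]; omega
  have h3o : hgt (oth i) w3 = -h := by rw [hw3, run_hgt_oth, h2o]; omega
  have l3i : ∀ ℓ : ℤ, ((w3.1 i)).labels ℓ = (z.1 i).labels ℓ := by
    intro ℓ
    by_cases hc : ℓ < h
    · rw [hw3, run_labels_i _ _ _ _ _ ℓ (by rw [h2i]; omega)]
      by_cases hc2 : ℓ < p
      · rw [hw2, run_labels_oth_lo' i (oth i) hio _ _ _ _ ℓ (by rw [h1i]; omega)]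
        rw [hw1, run_labels_i _ _ _ _ _ ℓ (by rw [hgt_origin]; omega)]
        rw [hvi ℓ hc2]
        rfl
      · rw [hw2, run_labels_oth_mid' i (oth i) hio _ _ _ _ ℓ (by rw [h1i]; omega)
          (by rw [h1i]; omega)]
    · have e1 : ((w3.1 i)).labels ℓ = 0 :=
        (w3.1 i).supp_below ℓ (by have := h3i; rw [hgt_def] at this; omega)
      have e2 : (z.1 i).labels ℓ = 0 :=
        (z.1 i).supp_below ℓ (by have := hdef; rw [hgt_def] at this; omega)
      rw [e1, e2]
  have l3o : ∀ ℓ : ℤ, ((w3.1 (oth i))).labels ℓ = (z.1 (oth i)).labels ℓ := by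
    have hoz : hgt (oth i) z = -h := by rw [hgt_oth]
    intro ℓ
    by_cases hc : ℓ < -h
    · by_cases hc2 : ℓ < -r
      · rw [hw3, run_labels_oth_lo _ _ _ _ _ ℓ (by rw [h2o]; omega)]
        rw [hw2, run_labels_i _ _ _ _ _ ℓ (by rw [h1o]; omega)]
        rw [hw1, run_labels_oth_lo _ _ _ _ _ ℓ (by rw [hgt_origin]; omega)]
        rw [hvj ℓ hc2]
        rfl
      · rw [hw3, run_labels_oth_mid _ _ _ _ _ ℓ (by rw [h2o]; omega) (by rw [h2o]; omega)]
    · have e1 : ((w3.1 (oth i))).labels ℓ = 0 :=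
        (w3.1 (oth i)).supp_below ℓ (by have := h3o; rw [hgt_def] at this; omega)
      have e2 : (z.1 (oth i)).labels ℓ = 0 :=
        (z.1 (oth i)).supp_below ℓ (by have := hoz; rw [hgt_def] at this; omega)
      rw [e1, e2]
  have hw3z : w3 = z := by
    apply Subtype.ext
    funext k
    rcases eq_or_eq_oth i k with rfl | rfl
    · refine TreeVert.ext'_s7 ?_ (funext fun ℓ => l3i ℓ)
      have e1 := h3i; rw [hgt_def] at e1
      have e2 := hdef; rw [hgt_def] at e2
      omega
    · refine TreeVert.ext'_s7 ?_ (funext fun ℓ => l3o ℓ)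
      have e1 := h3o; rw [hgt_def] at e1
      have e2 : hgt (oth i) z = -h := by rw [hgt_oth]
      rw [hgt_def] at e2
      omega
  obtain ⟨W1, hl1⟩ := run_walk i (fun _ => 0) hφ1 (origin 2 q) k1
  obtain ⟨W2, hl2⟩ := run_walk (oth i) ((z.1 i)).labels ((z.1 i)).labels_lt w1 k2
  obtain ⟨W3, hl3⟩ := run_walk i ((z.1 (oth i))).labels ((z.1 (oth i))).labels_lt w2 k3
  have hdist := SimpleGraph.dist_le
    ((W1.append W2).append (W3.copy rfl (hw3.symm.trans hw3z)))
  rw [SimpleGraph.Walk.length_append, SimpleGraph.Walk.length_append,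
    SimpleGraph.Walk.length_copy, hl1, hl2, hl3] at hdist
  have hd2 : ((DLGraph 2 q).dist (origin 2 q) z : ℤ) ≤ (k1 : ℤ) + (k2 : ℤ) + (k3 : ℤ) := by
    exact_mod_cast hdist
  omega

lemma dist_origin_le (z : DLVert 2 q) (i : Fin 2) (p r : ℤ)
    (hp : p ≤ 0) (hp' : p ≤ hgt i z) (hr : 0 ≤ r) (hr' : hgt i z ≤ r)
    (hvi : ∀ ℓ, ℓ < p → ((z.1 i)).labels ℓ = 0)
    (hvj : ∀ ℓ, ℓ < -r → ((z.1 (oth i))).labels ℓ = 0) :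
    ((DLGraph 2 q).dist (origin 2 q) z : ℤ) ≤ 2 * (r - p) - |hgt i z| := by
  rcases le_or_gt 0 (hgt i z) with hh | hh
  · rw [abs_of_nonneg hh]; exact dist_origin_le_aux z i p r hp hr' hh hvi hvj
  · rw [abs_of_nonpos hh.le]
    have h1 : hgt (oth i) z = - hgt i z := hgt_oth i z
    have hb := dist_origin_le_aux z (oth i) (-r) (-p) (by omega) (by rw [h1]; omega)
      (by rw [h1]; omega) hvj
      (by intro ℓ hℓ; rw [oth_oth]; exact hvi ℓ (by omega))
    rw [h1] at hb
    omega

end WBound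
section Profile

variable {q : ℕ}

lemma ray_key (γ : RaySpace 2 q) (i : Fin 2) (T : ℕ) (p r : ℤ)
    (hp : p ≤ 0) (hr : 0 ≤ r)
    (hrange : ∀ u : ℕ, u ≤ T → p ≤ hgt i (γ.1 u) ∧ hgt i (γ.1 u) ≤ r) :
    (T : ℤ) ≤ 2 * (r - p) - |hgt i (γ.1 T)| := by
  have hvi : ∀ ℓ, ℓ < p → ((γ.1 T).1 i).labels ℓ = 0 := fun ℓ hℓ =>
    ray_vanish γ i T ℓ fun u hu => lt_of_lt_of_le hℓ (hrange u hu).1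
  have hvj : ∀ ℓ, ℓ < -r → ((γ.1 T).1 (oth i)).labels ℓ = 0 := fun ℓ hℓ =>
    ray_vanish γ (oth i) T ℓ fun u hu => by
      rw [hgt_oth]
      have := (hrange u hu).2
      omega
  have hb := dist_origin_le (γ.1 T) i p r hp (hrange T le_rfl).1 hr
    (hrange T le_rfl).2 hvi hvj
  rw [ray_dist γ T] at hb
  exact hb

lemma ascend_forever (γ : RaySpace 2 q) (i : Fin 2) (n : ℕ) (hn : 1 ≤ n)
    (hdesc : ∀ u : ℕ, u ≤ n → hgt i (γ.1 u) = -(u : ℤ))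
    (hturn : hgt i (γ.1 (n + 1)) = -(n : ℤ) + 1) :
    ∀ t : ℕ, n ≤ t → hgt i (γ.1 t) = (t : ℤ) - 2 * n := by
  have main : ∀ t : ℕ, hgt i (γ.1 (n + t)) = (n : ℤ) + t - 2 * n := by
    intro t
    induction t using Nat.strong_induction_on with
    | _ t ih =>
      rcases t with _ | t
      · rw [Nat.add_zero, hdesc n le_rfl]; push_cast; omega
      rcases t with _ | t
      · rw [hturn]; push_cast; omega
      -- step case: know profile up to s := n + t + 1
      set s : ℕ := n + t + 1 with hs
      have hprof : ∀ u : ℕ, n ≤ u → u ≤ s → hgt i (γ.1 u) = (u : ℤ) - 2 * n := by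
        intro u hu1 hu2
        obtain ⟨t', rfl⟩ : ∃ t', u = n + t' := ⟨u - n, by omega⟩
        have := ih t' (by omega)
        rw [this]; push_cast; omega
      have hlow : ∀ u : ℕ, u ≤ s → -(n : ℤ) ≤ hgt i (γ.1 u) := by
        intro u hu
        rcases le_or_gt u n with h | h
        · rw [hdesc u h]; omega
        · rw [hprof u h.le hu]; omega
      have hhigh : ∀ u : ℕ, u ≤ s → hgt i (γ.1 u) ≤ max 0 ((s : ℤ) - 2 * n) := by
        intro u hu
        have h1 := le_max_left (0 : ℤ) ((s : ℤ) - 2 * n)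
        have h2 := le_max_right (0 : ℤ) ((s : ℤ) - 2 * n)
        rcases le_or_gt u n with h | h
        · rw [hdesc u h]; omega
        · rw [hprof u h.le hu]; omega
      have hstep := adj_hgt (ray_adj γ s) i
      rw [hprof s (by omega) le_rfl] at hstep
      have hgoal : n + (t + 2) = s + 1 := by omega
      rw [hgoal]
      rcases hstep with hgood | hbad
      · rw [hgood]; push_cast; omega
      · -- bad step at s: derive False
        exfalso
        rcases le_or_gt (s : ℤ) (2 * n) with hcase | hcase
        · -- first kill: s ≤ 2n
          have hrange : ∀ u : ℕ, u ≤ s + 1 →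
              -(n : ℤ) ≤ hgt i (γ.1 u) ∧ hgt i (γ.1 u) ≤ 0 := by
            intro u hu
            have hmax : max 0 ((s : ℤ) - 2 * n) = 0 := max_eq_left (by omega)
            rcases Nat.lt_or_ge u (s + 1) with h | h
            · have h' : u ≤ s := by omega
              have := hlow u h'
              have := hhigh u h'
              constructor <;> omega
            · have hu' : u = s + 1 := by omega
              rw [hu', hbad]
              constructor <;> push_cast <;> omega
          have hk := ray_key γ i (s + 1) (-(n : ℤ)) 0 (by omega) le_rfl hrange
          rw [hbad, abs_of_nonpos (by omega)] at hk
          push_cast at hk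
          omega
        · -- second case: s > 2n, forced descent then stuck at 0
          obtain ⟨j, hj⟩ : ∃ j : ℕ, (s : ℤ) = 2 * n + j + 1 :=
            ⟨s - 2 * n - 1, by push_cast; omega⟩
          have hmax : max 0 ((s : ℤ) - 2 * n) = (j : ℤ) + 1 :=
            by rw [max_eq_right (by omega)]; omega
          -- descent claim
          have hdesc2 : ∀ k : ℕ, k ≤ j → hgt i (γ.1 (s + 1 + k)) = (j : ℤ) - k := by
            intro k
            induction k using Nat.strong_induction_on with
            | _ k ihk =>
              intro hkj
              rcases k with _ | k
              · rw [Nat.add_zero, hbad]; omega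
              · have hprev : ∀ k' : ℕ, k' ≤ k → hgt i (γ.1 (s + 1 + k')) = (j : ℤ) - k' :=
                  fun k' h => ihk k' (by omega) (by omega)
                have hval := hprev k le_rfl
                have hstep2 := adj_hgt (ray_adj γ (s + 1 + k)) i
                rw [hval] at hstep2
                rw [show s + 1 + (k + 1) = s + 1 + k + 1 by omega]
                rcases hstep2 with hup | hdn
                · exfalso
                  have hrange2 : ∀ u : ℕ, u ≤ s + 1 + k + 1 →
                      -(n : ℤ) ≤ hgt i (γ.1 u) ∧ hgt i (γ.1 u) ≤ (j : ℤ) + 1 := by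
                    intro u hu
                    rcases le_or_gt u s with h | h
                    · have := hlow u h
                      have := hhigh u h
                      constructor <;> omega
                    · rcases Nat.lt_or_ge u (s + 1 + k + 1) with h2 | h2
                      · obtain ⟨k', rfl⟩ : ∃ k', u = s + 1 + k' := ⟨u - (s + 1), by omega⟩
                        have := hprev k' (by omega)
                        constructor <;> omega
                      · have hu' : u = s + 1 + k + 1 := by omega
                        rw [hu', hup]
                        constructor <;> omega
                  have hk2 := ray_key γ i (s + 1 + k + 1) (-(n : ℤ)) ((j : ℤ) + 1)
                    (by omega) (by omega) hrange2
                  rw [hup, abs_of_nonneg (by omega)] at hk2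
                  push_cast at hk2
                  omega
                · rw [hdn]; push_cast; omega
          -- now stuck at height 0 at time s + 1 + j
          have h0 := hdesc2 j le_rfl
          have hstep3 := adj_hgt (ray_adj γ (s + 1 + j)) i
          rw [h0] at hstep3
          have hrange3 : ∀ u : ℕ, u ≤ s + 1 + j →
              -(n : ℤ) ≤ hgt i (γ.1 u) ∧ hgt i (γ.1 u) ≤ (j : ℤ) + 1 := by
            intro u hu
            rcases le_or_gt u s with h | h
            · have := hlow u h
              have := hhigh u h
              constructor <;> omega
            · obtain ⟨k', rfl⟩ : ∃ k', u = s + 1 + k' := ⟨u - (s + 1), by omega⟩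
              have := hdesc2 k' (by omega)
              constructor <;> omega
          have hrange4 : ∀ u : ℕ, u ≤ s + 1 + j + 1 →
              -(n : ℤ) ≤ hgt i (γ.1 u) ∧ hgt i (γ.1 u) ≤ (j : ℤ) + 1 := by
            intro u hu
            rcases Nat.lt_or_ge u (s + 1 + j + 1) with h | h
            · exact hrange3 u (by omega)
            · have hu' : u = s + 1 + j + 1 := by omega
              rw [hu']
              rcases hstep3 with hx | hx <;> rw [hx] <;> constructor <;> omega
          have hk3 := ray_key γ i (s + 1 + j + 1) (-(n : ℤ)) ((j : ℤ) + 1)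
            (by omega) (by omega) hrange4
          have habs : |hgt i (γ.1 (s + 1 + j + 1))| = 1 := by
            rcases hstep3 with hx | hx <;> rw [hx] <;> simp
          rw [habs] at hk3
          push_cast at hk3
          omega
  intro t ht
  obtain ⟨t', rfl⟩ : ∃ t', t = n + t' := ⟨t - n, by omega⟩
  rw [main t']; push_cast; omega

end Profile
section Lower

variable {q : ℕ}

lemma walk_hgt_le {u v : DLVert 2 q} (w : (DLGraph 2 q).Walk u v) (i : Fin 2) :
    hgt i u - hgt i v ≤ (w.length : ℤ) ∧ hgt i v - hgt i u ≤ (w.length : ℤ) := by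
  induction w with
  | nil => simp
  | @cons a b c h p ih =>
    obtain ⟨ih1, ih2⟩ := ih
    have h1 := adj_hgt h i
    rw [SimpleGraph.Walk.length_cons]
    push_cast
    rcases h1 with h1 | h1 <;> constructor <;> omega

lemma dist_hgt_le {u v : DLVert 2 q} (hr : (DLGraph 2 q).Reachable u v) (i : Fin 2) :
    hgt i u - hgt i v ≤ ((DLGraph 2 q).dist u v : ℤ) ∧
      hgt i v - hgt i u ≤ ((DLGraph 2 q).dist u v : ℤ) := by
  obtain ⟨p, hp⟩ := hr.exists_walk_length_eq_dist
  rw [← hp]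
  exact walk_hgt_le p i

lemma walk_label_site {u v : DLVert 2 q} (w : (DLGraph 2 q).Walk u v) (i : Fin 2) (ℓ : ℤ)
    (hne : ((u.1 i)).labels ℓ ≠ ((v.1 i)).labels ℓ) :
    ∃ x ∈ w.support, hgt i x ≤ ℓ := by
  induction w with
  | nil => exact absurd rfl hne
  | @cons a b c h p ih =>
    by_cases h1 : hgt i a ≤ ℓ
    · exact ⟨a, SimpleGraph.Walk.start_mem_support _, h1⟩
    · by_cases h2 : hgt i b ≤ ℓ
      · refine ⟨b, ?_, h2⟩
        rw [SimpleGraph.Walk.support_cons]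
        exact List.mem_cons_of_mem _ (SimpleGraph.Walk.start_mem_support p)
      · have heq : ((b.1 i)).labels ℓ = ((a.1 i)).labels ℓ :=
          adj_labels_eq h i ℓ (by omega) (by omega)
        obtain ⟨x, hx1, hx2⟩ := ih (by rw [heq]; exact hne)
        refine ⟨x, ?_, hx2⟩
        rw [SimpleGraph.Walk.support_cons]
        exact List.mem_cons_of_mem _ hx1

lemma dist_label_le {u v : DLVert 2 q} (hr : (DLGraph 2 q).Reachable u v) (i : Fin 2)
    (ℓ : ℤ) (hne : ((u.1 i)).labels ℓ ≠ ((v.1 i)).labels ℓ) :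
    (hgt i u - ℓ) + (hgt i v - ℓ) ≤ ((DLGraph 2 q).dist u v : ℤ) := by
  classical
  obtain ⟨p, hp⟩ := hr.exists_walk_length_eq_dist
  obtain ⟨x, hx, hxl⟩ := walk_label_site p i ℓ hne
  have hlen : (p.takeUntil x hx).length + (p.dropUntil x hx).length
      = (DLGraph 2 q).dist u v := by
    rw [← hp, ← SimpleGraph.Walk.length_append, SimpleGraph.Walk.take_spec]
  have h1 := (walk_hgt_le (p.takeUntil x hx) i).1
  have h2 := (walk_hgt_le (p.dropUntil x hx) i).2
  omega

lemma D_first_label_ne (γ : RaySpace 2 q) (i : Fin 2) (N : ℕ) (hN : 1 ≤ N)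
    (hD : DescendsExactly i N γ.1) :
    ((γ.1 (N + 1)).1 i).labels (-(N : ℤ)) ≠ 0 := by
  intro h0
  have hh1 : ∀ t : ℕ, t ≤ N → hgt i (γ.1 t) = -(t : ℤ) := hD.1
  have hh2 : ∀ t : ℕ, N ≤ t → hgt i (γ.1 t) = (t : ℤ) - 2 * N := hD.2
  have hN1 : hgt i (γ.1 (N + 1)) = -(N : ℤ) + 1 := by
    rw [hh2 (N + 1) (by omega)]; push_cast; omega
  have hvi : ∀ ℓ, ℓ < -(N : ℤ) + 1 → ((γ.1 (N + 1)).1 i).labels ℓ = 0 := by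
    intro ℓ hℓ
    rcases (by omega : ℓ = -(N : ℤ) ∨ ℓ < -(N : ℤ)) with rfl | hl
    · exact h0
    · refine ray_vanish γ i (N + 1) ℓ fun u hu => ?_
      rcases le_or_gt u N with h | h
      · rw [hh1 u h]; omega
      · have hu' : u = N + 1 := by omega
        rw [hu', hN1]; omega
  have hvj : ∀ ℓ, ℓ < -(0 : ℤ) → ((γ.1 (N + 1)).1 (oth i)).labels ℓ = 0 := by
    intro ℓ hℓ
    refine ray_vanish γ (oth i) (N + 1) ℓ fun u hu => ?_
    rw [hgt_oth]
    rcases le_or_gt u N with h | h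
    · have := hh1 u h; omega
    · have hu' : u = N + 1 := by omega
      rw [hu', hN1]; omega
  have hb := dist_origin_le (γ.1 (N + 1)) i (-(N : ℤ) + 1) 0 (by omega)
    (by rw [hN1]) le_rfl (by rw [hN1]; omega) hvi hvj
  rw [ray_dist, hN1, abs_of_nonpos (by omega)] at hb
  push_cast at hb
  omega

lemma D_label_persist (γ : RaySpace 2 q) (i : Fin 2) (N : ℕ)
    (hD : DescendsExactly i N γ.1) :
    ∀ t : ℕ, N + 1 ≤ t →
      ((γ.1 t).1 i).labels (-(N : ℤ)) = ((γ.1 (N + 1)).1 i).labels (-(N : ℤ)) := by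
  have hh2 : ∀ t : ℕ, N ≤ t → hgt i (γ.1 t) = (t : ℤ) - 2 * N := hD.2
  intro t ht
  induction t, ht using Nat.le_induction with
  | base => rfl
  | succ t ht ih =>
    rw [adj_labels_eq (ray_adj γ t) i (-(N : ℤ))
      (by rw [hh2 t (by omega)]; omega)
      (by rw [hh2 (t + 1) (by omega)]; push_cast; omega)]
    exact ih

lemma D_label_zero (γ : RaySpace 2 q) (i : Fin 2) (a : ℕ)
    (hD : DescendsExactly i a γ.1) (ℓ : ℤ) (hℓ : ℓ < -(a : ℤ)) (t : ℕ) :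
    ((γ.1 t).1 i).labels ℓ = 0 := by
  have hh1 : ∀ u : ℕ, u ≤ a → hgt i (γ.1 u) = -(u : ℤ) := hD.1
  have hh2 : ∀ u : ℕ, a ≤ u → hgt i (γ.1 u) = (u : ℤ) - 2 * a := hD.2
  refine ray_vanish γ i t ℓ fun u _ => ?_
  rcases le_or_gt u a with h | h
  · rw [hh1 u h]; omega
  · rw [hh2 u h.le]; omega

lemma exists_profile (γ : RaySpace 2 q) :
    ∃ (i : Fin 2) (m : ℕ), DescendsExactly i m γ.1 := by
  classical
  have h0 : ∀ i : Fin 2, hgt i (γ.1 0) = 0 := fun i => by rw [γ.2.2]; rfl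
  have hoth0 : (oth 0 : Fin 2) = 1 := rfl
  have go : ∀ i : Fin 2, (¬ ∀ t : ℕ, hgt i (γ.1 t) = -(t : ℤ)) →
      ∃ m : ℕ, (∀ u : ℕ, u ≤ m → hgt i (γ.1 u) = -(u : ℤ)) ∧
        hgt i (γ.1 (m + 1)) = -(m : ℤ) + 1 ∧ (hgt i (γ.1 1) = -1 → 1 ≤ m) := by
    intro i hna
    push_neg at hna
    have hex : ∃ t : ℕ, ¬ (hgt i (γ.1 t) = -(t : ℤ)) := hna
    have hspec := Nat.find_spec hex
    have hmin := fun u (hu : u < Nat.find hex) => Nat.find_min hex hu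
    have hpos : 1 ≤ Nat.find hex := by
      rcases Nat.eq_zero_or_pos (Nat.find hex) with h | h
      · exfalso; apply hspec; rw [h, h0 i]; norm_num
      · exact h
    refine ⟨Nat.find hex - 1, fun u hu => ?_, ?_, ?_⟩
    · exact not_not.mp (hmin u (by omega))
    · have hm1 : Nat.find hex - 1 + 1 = Nat.find hex := by omega
      rw [hm1]
      have hprev : hgt i (γ.1 (Nat.find hex - 1)) = -((Nat.find hex : ℤ) - 1) := by
        have := not_not.mp (hmin (Nat.find hex - 1) (by omega))
        rw [this]; push_cast; omega
      have hstep := adj_hgt (ray_adj γ (Nat.find hex - 1)) i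
      rw [hm1, hprev] at hstep
      rcases hstep with h | h
      · rw [h]; push_cast; omega
      · exfalso; apply hspec; rw [h]; push_cast; omega
    · intro h1
      by_contra hm0
      have : Nat.find hex = 1 := by omega
      apply hspec
      rw [this, h1]
      norm_num
  by_cases hall : ∀ t : ℕ, hgt 0 (γ.1 t) = -(t : ℤ)
  · refine ⟨1, 0, fun t ht => ?_, fun t _ => ?_⟩
    · have ht0 : t = 0 := Nat.le_zero.mp ht
      subst ht0
      show hgt 1 (γ.1 0) = -((0 : ℕ) : ℤ)
      rw [h0 1]; norm_num
    · show hgt 1 (γ.1 t) = (t : ℤ) - 2 * ((0 : ℕ) : ℤ)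
      have e := hgt_oth 0 (γ.1 t)
      rw [hoth0] at e
      rw [e, hall t]; push_cast; ring
  · obtain ⟨m, hd, ht, hm1⟩ := go 0 hall
    rcases Nat.eq_zero_or_pos m with rfl | hm
    · by_cases hall2 : ∀ t : ℕ, hgt 1 (γ.1 t) = -(t : ℤ)
      · refine ⟨0, 0, fun t h => ?_, fun t _ => ?_⟩
        · have ht0 : t = 0 := Nat.le_zero.mp h
          subst ht0
          show hgt 0 (γ.1 0) = -((0 : ℕ) : ℤ)
          rw [h0 0]; norm_num
        · show hgt 0 (γ.1 t) = (t : ℤ) - 2 * ((0 : ℕ) : ℤ)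
          have e := hgt_oth 0 (γ.1 t)
          rw [hoth0] at e
          have := hall2 t
          push_cast
          omega
      · obtain ⟨m1, hd1, ht1, hm11⟩ := go 1 hall2
        have hgt01 : hgt 0 (γ.1 1) = 1 := by
          have := ht
          norm_num at this
          exact this
        have hgt11 : hgt 1 (γ.1 1) = -1 := by
          have e := hgt_oth 0 (γ.1 1)
          rw [hoth0] at e
          omega
        have hm1' : 1 ≤ m1 := hm11 hgt11
        exact ⟨1, m1, hd1, ascend_forever γ 1 m1 hm1' hd1 ht1⟩
    · exact ⟨0, m, hd, ascend_forever γ 0 m hm hd ht⟩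

lemma not_asymp_same (i : Fin 2) (a b : ℕ) (α β : RaySpace 2 q) (hab : a < b)
    (hb : 1 ≤ b) (hDa : DescendsExactly i a α.1) (hDb : DescendsExactly i b β.1) :
    ¬ Asymptotic α.1 β.1 := by
  rintro ⟨C, hC⟩
  set t := a + b + C + 1 with htdef
  have hra : (DLGraph 2 q).Reachable (α.1 t) (β.1 t) :=
    (reachable_origin α t).symm.trans (reachable_origin β t)
  have hla : ((α.1 t).1 i).labels (-(b : ℤ)) = 0 :=
    D_label_zero α i a hDa _ (by push_cast; omega) t
  have hlb : ((β.1 t).1 i).labels (-(b : ℤ)) ≠ 0 := by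
    rw [D_label_persist β i b hDb t (by omega)]
    exact D_first_label_ne β i b hb hDb
  have hne : ((α.1 t).1 i).labels (-(b : ℤ)) ≠ ((β.1 t).1 i).labels (-(b : ℤ)) := by
    rw [hla]; exact fun h => hlb h.symm
  have hd := dist_label_le hra i (-(b : ℤ)) hne
  have hha : hgt i (α.1 t) = (t : ℤ) - 2 * a := hDa.2 t (by omega)
  have hhb : hgt i (β.1 t) = (t : ℤ) - 2 * b := hDb.2 t (by omega)
  have hCd : ((DLGraph 2 q).dist (α.1 t) (β.1 t) : ℤ) ≤ (C : ℤ) := by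
    exact_mod_cast hC t
  rw [hha, hhb] at hd
  have htz : (t : ℤ) = (a : ℤ) + b + C + 1 := by rw [htdef]; push_cast; ring
  omega

lemma not_asymp_diff (i : Fin 2) (a b : ℕ) (α β : RaySpace 2 q)
    (hDa : DescendsExactly (oth i) a α.1) (hDb : DescendsExactly i b β.1) :
    ¬ Asymptotic α.1 β.1 := by
  rintro ⟨C, hC⟩
  set t := a + b + C + 1 with htdef
  have hra : (DLGraph 2 q).Reachable (α.1 t) (β.1 t) :=
    (reachable_origin α t).symm.trans (reachable_origin β t)
  have h1 : hgt (oth i) (α.1 t) = (t : ℤ) - 2 * a := hDa.2 t (by omega)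
  have h2 := hgt_oth i (α.1 t)
  have h3 : hgt i (β.1 t) = (t : ℤ) - 2 * b := hDb.2 t (by omega)
  have hd := (dist_hgt_le hra i).2
  have hCd : ((DLGraph 2 q).dist (α.1 t) (β.1 t) : ℤ) ≤ (C : ℤ) := by
    exact_mod_cast hC t
  have htz : (t : ℤ) = (a : ℤ) + b + C + 1 := by rw [htdef]; push_cast; ring
  omega

end Lower
instance : DiscreteTopology (DLVert d q) := ⟨rfl⟩

/-- for `n > 0`, the set `C_n^i` of classes bottoming out in tree
`i` at depth exactly `n` is open in the visual boundary of `DL_2(q)`. -/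
theorem Cset_isOpen {q : ℕ} (hq : 2 ≤ q) (i : Fin 2) (n : ℕ) (hn : 0 < n) :
    IsOpen (Cset q i n) := by
  have hn' : 1 ≤ n := hn
  have hpre : Quotient.mk (asympSetoid 2 q) ⁻¹' (Cset q i n) =
      {γ : RaySpace 2 q | ∀ u : ℕ, u ≤ n + 1 →
        hgt i (γ.1 u) = if u ≤ n then -(u : ℤ) else -(n : ℤ) + 1} := by
    ext γ
    simp only [Set.mem_preimage, Set.mem_setOf_eq]
    constructor
    · rintro ⟨γ'', hmk, hD''⟩
      have hasym : Asymptotic γ''.1 γ.1 := Quotient.exact hmk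
      have hasym' : Asymptotic γ.1 γ''.1 := by
        obtain ⟨C, hC⟩ := hasym
        exact ⟨C, fun t => by rw [SimpleGraph.dist_comm]; exact hC t⟩
      obtain ⟨i', m, hD⟩ := exists_profile γ
      have hDn : DescendsExactly i n γ.1 := by
        rcases eq_or_eq_oth i i' with h | h
        · rw [h] at hD
          rcases Nat.lt_trichotomy m n with hlt | heq | hgt2
          · exact absurd hasym' (not_asymp_same i m n γ γ'' hlt hn' hD hD'')
          · rwa [heq] at hD
          · exact absurd hasym (not_asymp_same i n m γ'' γ hgt2 (by omega) hD'' hD)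
        · rw [h] at hD
          exact absurd hasym' (not_asymp_diff i m n γ γ'' hD hD'')
      intro u hu
      by_cases h : u ≤ n
      · rw [if_pos h]; exact hDn.1 u h
      · rw [if_neg h]
        have hu1 : u = n + 1 := by omega
        subst hu1
        have h2 : hgt i (γ.1 (n + 1)) = ((n + 1 : ℕ) : ℤ) - 2 * n :=
          hDn.2 (n + 1) (by omega)
        rw [h2]; push_cast; ring
    · intro hloc
      have h1 : ∀ u : ℕ, u ≤ n → hgt i (γ.1 u) = -(u : ℤ) := fun u hu => by
        have := hloc u (by omega); rwa [if_pos hu] at this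
      have h2 : hgt i (γ.1 (n + 1)) = -(n : ℤ) + 1 := by
        have := hloc (n + 1) le_rfl; rwa [if_neg (by omega)] at this
      exact ⟨γ, rfl, h1, ascend_forever γ i n hn' h1 h2⟩
  have hopen : IsOpen {γ : RaySpace 2 q | ∀ u : ℕ, u ≤ n + 1 →
      hgt i (γ.1 u) = if u ≤ n then -(u : ℤ) else -(n : ℤ) + 1} := by
    have heq : {γ : RaySpace 2 q | ∀ u : ℕ, u ≤ n + 1 →
          hgt i (γ.1 u) = if u ≤ n then -(u : ℤ) else -(n : ℤ) + 1}
        = ⋂ u ∈ Finset.range (n + 2),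
          ((fun γ : RaySpace 2 q => γ.1 u) ⁻¹'
            {v : DLVert 2 q | hgt i v = if u ≤ n then -(u : ℤ) else -(n : ℤ) + 1}) := by
      ext γ
      simp only [Set.mem_setOf_eq, Set.mem_iInter, Set.mem_preimage, Finset.mem_range]
      constructor
      · intro h u hu; exact h u (by omega)
      · intro h u hu; exact h u (by omega)
    rw [heq]
    refine isOpen_biInter_finset fun u _ => ?_
    exact (isOpen_discrete _).preimage ((continuous_apply u).comp continuous_subtype_val)
  have hq2 : IsOpen ((Quotient.mk (asympSetoid 2 q)) ⁻¹' (Cset q i n)) := by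
    rw [hpre]; exact hopen
  exact (isQuotientMap_quotient_mk' (X := RaySpace 2 q)
    (s := asympSetoid 2 q)).isOpen_preimage.mp hq2

end DL
end
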